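/- arXiv:1110.6335 — 3 statements merged into one kernel-verified Lean document; each statement's English description precedes it below -/
import Mathlib

section
/- Let 𝔲(2) be the real Lie algebra of skew-adjoint 2×2 complex matrices, let k̄ = ℝ·F where F = [[0,0],[0,i]], and let K̄ = {[[1,0],[0,z]] : z ∈ ℂ, |z| = 1} ⊆ U(2). Set E₁ = [[0,1],[−1,0]], E₂ = [[0,i],[i,0]], E₃ = [[i,0],[0,−i]]. Then a real subspace m′ ⊆ 𝔲(2) satisfies 𝔲(2) = m′ ⊕ k̄ together with k m′ k⁻¹ ⊆ m′ for every k ∈ K̄ if and only if there exists a (unique) λ ∈ ℝ such that m′ = span_ℝ{E₁, E₂, E₃ + λF}. In other words, the reductive complements of k̄ in 𝔲(2) with respect to K̄ are exhausted by the one-parameter family m̄_λ = span_ℝ{E₁, E₂, E₃ + λF}, λ ∈ ℝ. -/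
open Complex Matrix

local notation "e1" => (!![0, 1; -1, 0] : Matrix (Fin 2) (Fin 2) ℂ)
local notation "e2" => (!![0, I; I, 0] : Matrix (Fin 2) (Fin 2) ℂ)
local notation "e3" => (!![I, 0; 0, -I] : Matrix (Fin 2) (Fin 2) ℂ)
local notation "ff" => (!![0, 0; 0, I] : Matrix (Fin 2) (Fin 2) ℂ)

noncomputable def u2 : Submodule ℝ (Matrix (Fin 2) (Fin 2) ℂ) :=
  skewAdjoint.submodule ℝ (Matrix (Fin 2) (Fin 2) ℂ)

private theorem mem_u2_iff {X : Matrix (Fin 2) (Fin 2) ℂ} : X ∈ u2 ↔ Xᴴ = -X := by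
  rw [u2]; exact skewAdjoint.mem_iff

private theorem mem_span_triple {M : Type*} [AddCommGroup M] [Module ℝ M] (A B C x : M) :
    x ∈ Submodule.span ℝ ({A,B,C} : Set M) ↔ ∃ a b c : ℝ, x = a•A + b•B + c•C := by
  simp only [Submodule.mem_span_insert, Submodule.mem_span_singleton]
  constructor
  · rintro ⟨a, _, ⟨b, _, ⟨c, rfl⟩, rfl⟩, rfl⟩; exact ⟨a, b, c, by rw [add_assoc]⟩
  · rintro ⟨a, b, c, rfl⟩; exact ⟨a, _, ⟨b, _, ⟨c, rfl⟩, rfl⟩, by rw [add_assoc]⟩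

private theorem smul_f (t : ℝ) : t • ff = !![0,0;0,(t:ℂ)*I] := by
  simp [← Matrix.ext_iff, Fin.forall_fin_two]

private theorem f_ne_zero : ff ≠ 0 := by
  intro h
  rw [← Matrix.ext_iff] at h
  simpa [I_ne_zero] using h 1 1

private theorem combo4 (a b c d : ℝ) :
    a•e1 + b•e2 + c•e3 + d•ff
      = !![(c:ℂ)*I, (a:ℂ)+b*I; -(a:ℂ)+b*I, (-(c:ℂ)+d)*I] := by
  simp [← Matrix.ext_iff, Fin.forall_fin_two]
  ring_nf

private theorem combo3 (a b c lam : ℝ) :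
    a•e1 + b•e2 + c•(e3 + lam•ff)
      = !![(c:ℂ)*I, (a:ℂ)+b*I; -(a:ℂ)+b*I, (-(c:ℂ)+c*lam)*I] := by
  simp [← Matrix.ext_iff, Fin.forall_fin_two]
  ring_nf

private theorem u2_decomp {X : Matrix (Fin 2) (Fin 2) ℂ} (hX : X ∈ u2) :
    ∃ a b c d : ℝ, X = a•e1 + b•e2 + c•e3 + d•ff := by
  rw [mem_u2_iff, ← Matrix.ext_iff] at hX
  have h00 := hX 0 0
  have h01 := hX 0 1
  have h11 := hX 1 1
  simp only [Matrix.conjTranspose_apply, Matrix.neg_apply] at h00 h01 h11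
  have hre00 : (X 0 0).re = 0 := by
    have := congrArg Complex.re h00; simp at this; linarith
  have hre11 : (X 1 1).re = 0 := by
    have := congrArg Complex.re h11; simp at this; linarith
  refine ⟨(X 0 1).re, (X 0 1).im, (X 0 0).im, (X 0 0).im + (X 1 1).im, ?_⟩
  rw [combo4]
  have h : X 1 0 = -(starRingEnd ℂ) (X 0 1) := by simpa using congrArg star h01
  rw [← Matrix.ext_iff]
  intro i j
  fin_cases i <;> fin_cases j <;> simp
  · apply Complex.ext <;> simp [hre00]
  · rw [h]; apply Complex.ext <;> simp
  · apply Complex.ext <;> simp [hre11]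

private theorem inv_diag (z : ℂ) (hz : z ≠ 0) :
    (!![1,0;0,z] : Matrix (Fin 2) (Fin 2) ℂ)⁻¹ = !![1,0;0,z⁻¹] := by
  apply Matrix.inv_eq_right_inv
  simp [Matrix.mul_fin_two, mul_inv_cancel₀ hz, Matrix.one_fin_two]

private theorem conj_neg_one (X : Matrix (Fin 2) (Fin 2) ℂ) :
    (!![1,0;0,(-1:ℂ)] : Matrix (Fin 2) (Fin 2) ℂ) * X * (!![1,0;0,(-1:ℂ)])⁻¹
      = !![X 0 0, -(X 0 1); -(X 1 0), X 1 1] := by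
  rw [inv_diag (-1 : ℂ) (by norm_num)]
  rw [Matrix.eta_fin_two X]
  simp [Matrix.mul_fin_two, ← Matrix.ext_iff, Fin.forall_fin_two, inv_neg]


private theorem e3lam (lam : ℝ) : e3 + lam • ff = !![I, 0; 0, -I + (lam:ℂ)*I] := by
  rw [smul_f]
  simp [← Matrix.ext_iff, Fin.forall_fin_two]

private theorem diag_part_mem (m' : Submodule ℝ (Matrix (Fin 2) (Fin 2) ℂ))
    (hAd : ∀ z : ℂ, ‖z‖ = 1 → ∀ X ∈ m',
      (!![1, 0; 0, z] : Matrix (Fin 2) (Fin 2) ℂ) * X * (!![1, 0; 0, z])⁻¹ ∈ m')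
    {X : Matrix (Fin 2) (Fin 2) ℂ} (hX : X ∈ m') :
    !![X 0 0 + X 0 0, 0; 0, X 1 1 + X 1 1] ∈ m' := by
  have h := hAd (-1) (by norm_num) X hX
  rw [conj_neg_one] at h
  have key : !![X 0 0 + X 0 0, 0; 0, X 1 1 + X 1 1]
      = X + !![X 0 0, -(X 0 1); -(X 1 0), X 1 1] := by
    conv_rhs => rw [Matrix.eta_fin_two X]
    simp [← Matrix.ext_iff, Fin.forall_fin_two]
  rw [key]
  exact m'.add_mem hX h

private theorem u2_gen₁ : e1 ∈ u2 := by
  rw [mem_u2_iff]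
  simp [← Matrix.ext_iff, Fin.forall_fin_two]

private theorem u2_gen₂ : e2 ∈ u2 := by
  rw [mem_u2_iff]
  simp [← Matrix.ext_iff, Fin.forall_fin_two]

private theorem u2_gen₃ (lam : ℝ) : e3 + lam • ff ∈ u2 := by
  rw [mem_u2_iff, e3lam]
  simp [← Matrix.ext_iff, Fin.forall_fin_two]
  ring

private theorem u2_genF : ff ∈ u2 := by
  rw [mem_u2_iff]
  simp [← Matrix.ext_iff, Fin.forall_fin_two]

private theorem regroup (a b c d lam : ℝ) :
    a•e1 + b•e2 + c•e3 + d•ff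
      = (a•e1 + b•e2 + c•(e3 + lam•ff)) + (d - c*lam)•ff := by
  rw [smul_add, smul_smul, sub_smul]
  abel


/-- With `k̄ = ℝ·F`, `F = [[0,0],[0,i]]`, and
`K̄ = {[[1,0],[0,z]] : |z| = 1} ⊆ U(2)`, a real subspace `m′ ⊆ 𝔲(2)` satisfies
`𝔲(2) = m′ ⊕ k̄` and `k m′ k⁻¹ ⊆ m′` for all `k ∈ K̄` if and only if there is a
(unique) `λ ∈ ℝ` with `m′ = span_ℝ{E₁, E₂, E₃ + λF}`, where
`E₁ = [[0,1],[−1,0]]`, `E₂ = [[0,i],[i,0]]`, `E₃ = [[i,0],[0,−i]]`. -/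
theorem reductive_complements_in_u2 (m' : Submodule ℝ (Matrix (Fin 2) (Fin 2) ℂ)) :
    (m' ≤ u2 ∧
      m' ⊓ (ℝ ∙ (!![0, 0; 0, I] : Matrix (Fin 2) (Fin 2) ℂ)) = ⊥ ∧
      m' ⊔ (ℝ ∙ (!![0, 0; 0, I] : Matrix (Fin 2) (Fin 2) ℂ)) = u2 ∧
      (∀ z : ℂ, ‖z‖ = 1 → ∀ X ∈ m',
        (!![1, 0; 0, z] : Matrix (Fin 2) (Fin 2) ℂ) * X * (!![1, 0; 0, z])⁻¹ ∈ m')) ↔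
    ∃! lam : ℝ, m' = Submodule.span ℝ
      ({!![0, 1; -1, 0], !![0, I; I, 0],
        !![I, 0; 0, -I] + lam • !![0, 0; 0, I]} : Set (Matrix (Fin 2) (Fin 2) ℂ)) := by
  constructor
  · rintro ⟨hle, hinf, hsup, hAd⟩
    have hzero : ∀ t : ℝ, t • ff ∈ m' → t = 0 := by
      intro t ht
      have hmem : t • ff ∈ m' ⊓ (ℝ ∙ ff) :=
        ⟨ht, Submodule.mem_span_singleton.mpr ⟨t, rfl⟩⟩
      rw [hinf, Submodule.mem_bot] at hmem
      rcases smul_eq_zero.mp hmem with h | h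
      · exact h
      · exact absurd h f_ne_zero
    -- e1 ∈ m'
    have hE1 : e1 ∈ m' := by
      have hu : e1 ∈ m' ⊔ (ℝ ∙ ff) := hsup ▸ u2_gen₁
      obtain ⟨X, hXm, Y, hY, hXY⟩ := Submodule.mem_sup.mp hu
      obtain ⟨t, rfl⟩ := Submodule.mem_span_singleton.mp hY
      have hXeq : X = !![0, 1; -1, -((t:ℂ)*I)] := by
        have h1 : X = e1 - t • ff := eq_sub_of_add_eq hXY
        rw [h1, smul_f]
        simp [← Matrix.ext_iff, Fin.forall_fin_two]
      rw [hXeq] at hXm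
      have hd := diag_part_mem m' hAd hXm
      simp only [Matrix.of_apply, Matrix.cons_val', Matrix.cons_val_zero, Matrix.cons_val_one,
        Matrix.head_cons, Matrix.head_fin_const, Matrix.empty_val',
        Matrix.cons_val_fin_one] at hd
      have hd' : (-(2*t)) • ff ∈ m' := by
        have : (-(2*t)) • ff = !![(0:ℂ) + 0, 0; 0, -((t:ℂ)*I) + -((t:ℂ)*I)] := by
          rw [smul_f]
          simp [← Matrix.ext_iff, Fin.forall_fin_two]
          ring_nf
        rw [this]; exact hd
      have ht0 : t = 0 := by have := hzero _ hd'; linarith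
      subst ht0
      simpa using hXm
    -- e2 ∈ m'
    have hE2 : e2 ∈ m' := by
      have hu : e2 ∈ m' ⊔ (ℝ ∙ ff) := hsup ▸ u2_gen₂
      obtain ⟨X, hXm, Y, hY, hXY⟩ := Submodule.mem_sup.mp hu
      obtain ⟨t, rfl⟩ := Submodule.mem_span_singleton.mp hY
      have hXeq : X = !![0, I; I, -((t:ℂ)*I)] := by
        have h1 : X = e2 - t • ff := eq_sub_of_add_eq hXY
        rw [h1, smul_f]
        simp [← Matrix.ext_iff, Fin.forall_fin_two]
      rw [hXeq] at hXm
      have hd := diag_part_mem m' hAd hXm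
      simp only [Matrix.of_apply, Matrix.cons_val', Matrix.cons_val_zero, Matrix.cons_val_one,
        Matrix.head_cons, Matrix.head_fin_const, Matrix.empty_val',
        Matrix.cons_val_fin_one] at hd
      have hd' : (-(2*t)) • ff ∈ m' := by
        have : (-(2*t)) • ff = !![(0:ℂ) + 0, 0; 0, -((t:ℂ)*I) + -((t:ℂ)*I)] := by
          rw [smul_f]
          simp [← Matrix.ext_iff, Fin.forall_fin_two]
          ring_nf
        rw [this]; exact hd
      have ht0 : t = 0 := by have := hzero _ hd'; linarith
      subst ht0
      simpa using hXm
    -- e3 + lam • ff ∈ m' for some lam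
    obtain ⟨lam, hE3⟩ : ∃ lam : ℝ, e3 + lam • ff ∈ m' := by
      have hu : e3 ∈ m' ⊔ (ℝ ∙ ff) := by
        refine hsup ▸ ?_
        rw [mem_u2_iff]
        simp [← Matrix.ext_iff, Fin.forall_fin_two]
      obtain ⟨X, hXm, Y, hY, hXY⟩ := Submodule.mem_sup.mp hu
      obtain ⟨t, rfl⟩ := Submodule.mem_span_singleton.mp hY
      refine ⟨-t, ?_⟩
      have h1 : e3 + (-t) • ff = X := by
        rw [eq_sub_of_add_eq hXY, neg_smul, sub_eq_add_neg]
      rw [h1]; exact hXm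
    -- the span equality
    have hspan : m' = Submodule.span ℝ ({e1, e2, e3 + lam • ff} :
        Set (Matrix (Fin 2) (Fin 2) ℂ)) := by
      apply le_antisymm
      · intro X hX
        obtain ⟨a, b, c, d, hXd⟩ := u2_decomp (hle hX)
        have hmem : (d - c*lam) • ff ∈ m' := by
          have heq : (d - c*lam) • ff
              = X - (a•e1 + b•e2 + c•(e3 + lam•ff)) := by
            rw [hXd, regroup a b c d lam]; abel
          rw [heq]
          exact m'.sub_mem hX (m'.add_mem (m'.add_mem (m'.smul_mem a hE1)
            (m'.smul_mem b hE2)) (m'.smul_mem c hE3))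
        have h0 : d - c*lam = 0 := hzero _ hmem
        have hX' : X = a•e1 + b•e2 + c•(e3 + lam•ff) := by
          rw [hXd, regroup a b c d lam, h0, zero_smul, add_zero]
        exact (mem_span_triple _ _ _ _).mpr ⟨a, b, c, hX'⟩
      · rw [Submodule.span_le]
        rintro x hx
        simp only [Set.mem_insert_iff, Set.mem_singleton_iff] at hx
        rcases hx with rfl | rfl | rfl
        · exact hE1
        · exact hE2
        · exact hE3
    refine ⟨lam, hspan, ?_⟩
    intro y hy
    have h3y : e3 + y • ff ∈ m' := by
      rw [hy]
      exact Submodule.subset_span (by simp)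
    have hdiff : (y - lam) • ff ∈ m' := by
      have heq : (y - lam) • ff = (e3 + y • ff) - (e3 + lam • ff) := by
        rw [sub_smul]; abel
      rw [heq]
      exact m'.sub_mem h3y hE3
    have := hzero _ hdiff
    linarith
  · rintro ⟨lam, hm, -⟩
    subst hm
    have hspanle : Submodule.span ℝ ({e1, e2, e3 + lam • ff} :
        Set (Matrix (Fin 2) (Fin 2) ℂ)) ≤ u2 := by
      rw [Submodule.span_le]
      rintro x hx
      simp only [Set.mem_insert_iff, Set.mem_singleton_iff] at hx
      rcases hx with rfl | rfl | rfl
      · exact u2_gen₁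
      · exact u2_gen₂
      · exact u2_gen₃ lam
    refine ⟨hspanle, ?_, ?_, ?_⟩
    · -- trivial intersection
      rw [eq_bot_iff]
      rintro x ⟨hx1, hx2⟩
      obtain ⟨a, b, c, hx1⟩ := (mem_span_triple _ _ _ _).mp hx1
      obtain ⟨t, rfl⟩ := Submodule.mem_span_singleton.mp hx2
      rw [combo3, smul_f, ← Matrix.ext_iff] at hx1
      have h00 := hx1 0 0
      have h01 := hx1 0 1
      have h11 := hx1 1 1
      simp only [Matrix.of_apply, Matrix.cons_val', Matrix.cons_val_zero, Matrix.cons_val_one,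
        Matrix.head_cons, Matrix.empty_val', Matrix.cons_val_fin_one] at h00 h01 h11
      -- h00 : 0 = c * I, h01 : 0 = a + b * I, h11 : t * I = (-c + c * lam) * I
      have hc : c = 0 := by
        have := congrArg Complex.im h00
        simpa using this.symm
      have ht : t = 0 := by
        have := congrArg Complex.im h11
        simp [hc] at this
        exact this
      simp [ht, Submodule.mem_bot]
    · -- sup is u2
      apply le_antisymm
      · apply sup_le hspanle
        rw [Submodule.span_le]
        rintro x hx
        simp only [Set.mem_singleton_iff] at hx
        subst hx
        exact u2_genF
      · intro X hX
        obtain ⟨a, b, c, d, hXd⟩ := u2_decomp hX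
        rw [hXd, regroup a b c d lam]
        exact Submodule.add_mem_sup
          ((mem_span_triple _ _ _ _).mpr ⟨a, b, c, rfl⟩)
          (Submodule.mem_span_singleton.mpr ⟨d - c*lam, rfl⟩)
    · -- Ad invariance
      intro z hz X hX
      have hz0 : z ≠ 0 := by
        intro h; rw [h] at hz; simp at hz
      have hns : Complex.normSq z = 1 := by
        rw [Complex.normSq_eq_norm_sq, hz, one_pow]
      have hzinv : z⁻¹ = (starRingEnd ℂ) z := by
        rw [Complex.inv_def, hns]
        simp
      induction hX using Submodule.span_induction with
      | mem x hx =>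
        simp only [Set.mem_insert_iff, Set.mem_singleton_iff] at hx
        rcases hx with rfl | rfl | rfl
        · -- e1
          have hc : !![1,0;0,z] * e1 * (!![1,0;0,z])⁻¹
              = z.re • e1 + (-z.im) • e2 + (0:ℝ) • (e3 + lam • ff) := by
            rw [inv_diag z hz0, combo3, hzinv]
            rw [← Matrix.ext_iff]
            intro i j
            fin_cases i <;> fin_cases j <;> simp [Matrix.mul_fin_two] <;>
              (apply Complex.ext <;> simp [mul_comm])
          rw [hc]
          exact (mem_span_triple _ _ _ _).mpr ⟨_, _, _, rfl⟩
        · -- e2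
          have hc : !![1,0;0,z] * e2 * (!![1,0;0,z])⁻¹
              = z.im • e1 + z.re • e2 + (0:ℝ) • (e3 + lam • ff) := by
            rw [inv_diag z hz0, combo3, hzinv]
            rw [← Matrix.ext_iff]
            intro i j
            fin_cases i <;> fin_cases j <;> simp [Matrix.mul_fin_two] <;>
              (apply Complex.ext <;> simp [mul_comm])
          rw [hc]
          exact (mem_span_triple _ _ _ _).mpr ⟨_, _, _, rfl⟩
        · -- e3 + lam ff
          have hc : !![1,0;0,z] * (e3 + lam • ff) * (!![1,0;0,z])⁻¹
              = e3 + lam • ff := by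
            rw [inv_diag z hz0, e3lam]
            simp [Matrix.mul_fin_two, ← Matrix.ext_iff, Fin.forall_fin_two]
            rw [mul_comm z, mul_assoc, mul_inv_cancel₀ hz0, mul_one]
          rw [hc]
          exact Submodule.subset_span (by simp)
      | zero => simp
      | add x y hx hy ihx ihy =>
        have : !![1,0;0,z] * (x + y) * (!![1,0;0,z])⁻¹
            = !![1,0;0,z] * x * (!![1,0;0,z])⁻¹ + !![1,0;0,z] * y * (!![1,0;0,z])⁻¹ := by
          rw [mul_add, add_mul]
        rw [this]
        exact Submodule.add_mem _ ihx ihy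
      | smul r x hx ihx =>
        have : !![1,0;0,z] * (r • x) * (!![1,0;0,z])⁻¹
            = r • (!![1,0;0,z] * x * (!![1,0;0,z])⁻¹) := by
          rw [Matrix.mul_smul, Matrix.smul_mul]
        rw [this]
        exact Submodule.smul_mem _ r ihx
end

section
/- Let ℍ be the real quaternions, 𝔰𝔭(2) = {A ∈ M₂(ℍ) : A* = −A} the skew-adjoint 2×2 quaternionic matrices, and identify 𝔲(1) with ℝ, so V = 𝔰𝔭(2) ⊕ ℝ. Let K̄ = {(diag(z,q), z) : z ∈ U(1), q ∈ Sp(1)} act on V by (diag(z,q), z)•(A, s) = (diag(z,q) A diag(z,q)*, s), and let k̄ = {(diag(t i, b), t) : t ∈ ℝ, b ∈ Im ℍ} = span_ℝ{([[i,0],[0,0]],1), ([[0,0],[0,i]],0), ([[0,0],[0,j]],0), ([[0,0],[0,k]],0)}. Then a real subspace m′ ⊆ V satisfies V = m′ ⊕ k̄ together with K̄•m′ ⊆ m′ if and only if there exists a (unique) λ ∈ ℝ such that m′ = span_ℝ{ ([[0,1],[−1,0]],0), ((1+λ)[[i,0],[0,0]], λ), ([[0,i],[i,0]],0), ([[j,0],[0,0]],0),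 ([[0,j],[j,0]],0), ([[k,0],[0,0]],0), ([[0,k],[k,0]],0) }. In other words, the K̄-invariant complements of k̄ in 𝔰𝔭(2) ⊕ 𝔲(1) form the one-parameter family m̄_λ obtained as graphs of the equivariant maps φ_λ. -/
open scoped Quaternion

instance : StarModule ℝ ℍ[ℝ] where
  star_smul r a := by rw [Quaternion.star_smul]; norm_num

/-- The quaternion unit `i`. -/
def qI : ℍ[ℝ] := ⟨0, 1, 0, 0⟩
/-- The quaternion unit `j`. -/
def qJ : ℍ[ℝ] := ⟨0, 0, 1, 0⟩
/-- The quaternion unit `k`. -/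
def qK : ℍ[ℝ] := ⟨0, 0, 0, 1⟩

/-- `V = 𝔰𝔭(2) ⊕ 𝔲(1)`: pairs `(A, s)` with `A` a skew-adjoint `2×2` quaternionic matrix
and `s ∈ ℝ ≅ 𝔲(1)`, as a real submodule of `M₂(ℍ) × ℝ`. -/
def sp2u1 : Submodule ℝ (Matrix (Fin 2) (Fin 2) ℍ[ℝ] × ℝ) where
  carrier := {p | star p.1 = -p.1}
  zero_mem' := by simp
  add_mem' := by
    intro p q hp hq
    show star (p.1 + q.1) = -(p.1 + q.1)
    rw [star_add, hp, hq, neg_add]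
  smul_mem' := by
    intro r p hp
    show star (r • p.1) = -(r • p.1)
    rw [star_smul, hp, star_trivial, smul_neg]

/-- `k̄`, the isotropy algebra of `(1,0) ∈ S⁷` in `𝔰𝔭(2) ⊕ 𝔲(1)`:
`span_ℝ{([[i,0],[0,0]],1), ([[0,0],[0,i]],0), ([[0,0],[0,j]],0), ([[0,0],[0,k]],0)}`. -/
noncomputable def kbarSp : Submodule ℝ (Matrix (Fin 2) (Fin 2) ℍ[ℝ] × ℝ) :=
  Submodule.span ℝ
    ({(!![qI, 0; 0, 0], 1), (!![0, 0; 0, qI], 0), (!![0, 0; 0, qJ], 0), (!![0, 0; 0, qK], 0)} :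
      Set (Matrix (Fin 2) (Fin 2) ℍ[ℝ] × ℝ))

@[simp] lemma qI_re : qI.re = 0 := rfl
@[simp] lemma qI_imI : qI.imI = 1 := rfl
@[simp] lemma qI_imJ : qI.imJ = 0 := rfl
@[simp] lemma qI_imK : qI.imK = 0 := rfl
@[simp] lemma qJ_re : qJ.re = 0 := rfl
@[simp] lemma qJ_imI : qJ.imI = 0 := rfl
@[simp] lemma qJ_imJ : qJ.imJ = 1 := rfl
@[simp] lemma qJ_imK : qJ.imK = 0 := rfl
@[simp] lemma qK_re : qK.re = 0 := rfl
@[simp] lemma qK_imI : qK.imI = 0 := rfl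
@[simp] lemma qK_imJ : qK.imJ = 0 := rfl
@[simp] lemma qK_imK : qK.imK = 1 := rfl

namespace Red5

abbrev V : Type := Matrix (Fin 2) (Fin 2) ℍ[ℝ] × ℝ

def Keq : Submodule ℝ V where
  carrier := {p | p.1 0 1 = 0 ∧ p.1 1 0 = 0 ∧ p.1 0 0 = p.2 • qI ∧ (p.1 1 1).re = 0}
  zero_mem' := ⟨rfl, rfl, by simp, rfl⟩
  add_mem' := by
    rintro p q ⟨h1, h2, h3, h4⟩ ⟨k1, k2, k3, k4⟩
    refine ⟨?_, ?_, ?_, ?_⟩ <;>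
      simp only [Prod.fst_add, Prod.snd_add, Matrix.add_apply, Quaternion.re_add,
        h1, h2, h3, h4, k1, k2, k3, k4, add_smul, add_zero]
  smul_mem' := by
    rintro r p ⟨h1, h2, h3, h4⟩
    refine ⟨?_, ?_, ?_, ?_⟩ <;>
      simp only [Prod.smul_fst, Prod.smul_snd, Matrix.smul_apply, Quaternion.re_smul,
        h1, h2, h3, h4, smul_smul, smul_zero] <;> simp [mul_comm]

lemma kbar_eq : kbarSp = Keq := by
  apply le_antisymm
  · rw [kbarSp, Submodule.span_le]
    rintro x (rfl | rfl | rfl | rfl) <;>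
      refine ⟨by simp, by simp, by simp, by simp [qI_re, qI_imI, qI_imJ, qI_imK, qJ_re, qJ_imI, qJ_imJ, qJ_imK, qK_re, qK_imI, qK_imJ, qK_imK]⟩
  · rintro p ⟨e1, e2, e3, e4⟩
    have hp : p = p.2 • ((!![qI, 0; 0, 0], 1) : V) + (p.1 1 1).imI • ((!![0, 0; 0, qI], 0) : V)
        + (p.1 1 1).imJ • ((!![0, 0; 0, qJ], 0) : V)
        + (p.1 1 1).imK • ((!![0, 0; 0, qK], 0) : V) := by
      refine Prod.ext ?_ ?_
      · apply Matrix.ext; intro i j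
        fin_cases i <;> fin_cases j <;>
          simp only [Fin.mk_zero, Fin.mk_one, Prod.fst_add, Prod.smul_fst, Matrix.add_apply,
            Matrix.smul_apply, Matrix.cons_val', Matrix.cons_val_zero, Matrix.cons_val_one,
            Matrix.head_cons, Matrix.head_fin_const, Matrix.empty_val', Matrix.cons_val_fin_one,
            smul_zero, add_zero, zero_add, e1, e2, e3] <;>
          first
            | rfl
            | (apply Quaternion.ext <;> simp [qI_re, qI_imI, qI_imJ, qI_imK, qJ_re, qJ_imI, qJ_imJ, qJ_imK, qK_re, qK_imI, qK_imJ, qK_imK, e4])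
      · simp
    rw [hp]
    refine add_mem (add_mem (add_mem ?_ ?_) ?_) ?_ <;>
      refine Submodule.smul_mem _ _ (Submodule.subset_span ?_)
    · exact Set.mem_insert _ _
    · exact Set.mem_insert_of_mem _ (Set.mem_insert _ _)
    · exact Set.mem_insert_of_mem _ (Set.mem_insert_of_mem _ (Set.mem_insert _ _))
    · exact Set.mem_insert_of_mem _ (Set.mem_insert_of_mem _ (Set.mem_insert_of_mem _ rfl))

def mSet (l : ℝ) : Set V :=
  {(!![0, 1; -1, 0], 0),
    ((1 + l) • !![qI, 0; 0, 0], l),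
    (!![0, qI; qI, 0], 0),
    (!![qJ, 0; 0, 0], 0),
    (!![0, qJ; qJ, 0], 0),
    (!![qK, 0; 0, 0], 0),
    (!![0, qK; qK, 0], 0)}

def Meq (l : ℝ) : Submodule ℝ V where
  carrier := {p | star p.1 = -p.1 ∧ p.1 1 1 = 0 ∧ l * (p.1 0 0).imI = (1 + l) * p.2}
  zero_mem' := ⟨by simp, rfl, by simp⟩
  add_mem' := by
    rintro p q ⟨h1, h2, h3⟩ ⟨k1, k2, k3⟩
    refine ⟨?_, ?_, ?_⟩
    · show star (p.1 + q.1) = -(p.1 + q.1); rw [star_add, h1, k1, neg_add]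
    · show (p.1 + q.1) 1 1 = 0; simp [Matrix.add_apply, h2, k2]
    · show l * ((p.1 + q.1) 0 0).imI = (1 + l) * (p.2 + q.2)
      simp only [Matrix.add_apply, Quaternion.imI_add]
      ring_nf; ring_nf at h3 k3; linarith
  smul_mem' := by
    rintro r p ⟨h1, h2, h3⟩
    refine ⟨?_, ?_, ?_⟩
    · show star (r • p.1) = -(r • p.1); rw [star_smul, h1, star_trivial, smul_neg]
    · show (r • p.1) 1 1 = 0; simp [Matrix.smul_apply, h2]
    · show l * ((r • p.1) 0 0).imI = (1 + l) * (r * p.2)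
      simp only [Matrix.smul_apply, Quaternion.imI_smul, smul_eq_mul]
      linear_combination r * h3

set_option maxHeartbeats 1000000 in
lemma mbar_eq (l : ℝ) : Submodule.span ℝ (mSet l) = Meq l := by
  apply le_antisymm
  · rw [Submodule.span_le]
    rintro x (rfl | rfl | rfl | rfl | rfl | rfl | rfl) <;>
      refine ⟨?_, by simp, by simp [Matrix.smul_apply, qI_re, qI_imI, qI_imJ, qI_imK, qJ_re, qJ_imI, qJ_imJ, qJ_imK, qK_re, qK_imI, qK_imJ, qK_imK]; try ring⟩ <;>
      · apply Matrix.ext; intro i j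
        fin_cases i <;> fin_cases j <;>
          simp only [Fin.mk_zero, Fin.mk_one, Matrix.star_apply, Matrix.neg_apply,
            Matrix.smul_apply, Matrix.cons_val', Matrix.cons_val_zero, Matrix.cons_val_one,
            Matrix.head_cons, Matrix.head_fin_const, Matrix.empty_val', Matrix.cons_val_fin_one,
            star_zero, neg_zero, smul_zero] <;>
          first
            | rfl
            | (apply Quaternion.ext <;> simp [qI_re, qI_imI, qI_imJ, qI_imK, qJ_re, qJ_imI, qJ_imJ, qJ_imK, qK_re, qK_imI, qK_imJ, qK_imK])
  · rintro p ⟨hskew, hd, hrel⟩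
    have h00 : star (p.1 0 0) = -(p.1 0 0) := by
      simpa [Matrix.star_apply] using congrFun (congrFun hskew 0) 0
    have hre : (p.1 0 0).re = 0 := by
      have := congrArg QuaternionAlgebra.re h00; simp at this; linarith
    have h10' : star (p.1 0 1) = -(p.1 1 0) := by
      simpa [Matrix.star_apply] using congrFun (congrFun hskew 1) 0
    have h10 : p.1 1 0 = -star (p.1 0 1) := by rw [h10']; simp
    have hp : p = (p.1 0 1).re • ((!![0, 1; -1, 0], 0) : V)
        + ((p.1 0 0).imI - p.2) • (((1 + l) • !![qI, 0; 0, 0], l) : V)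
        + (p.1 0 1).imI • ((!![0, qI; qI, 0], 0) : V)
        + (p.1 0 0).imJ • ((!![qJ, 0; 0, 0], 0) : V)
        + (p.1 0 1).imJ • ((!![0, qJ; qJ, 0], 0) : V)
        + (p.1 0 0).imK • ((!![qK, 0; 0, 0], 0) : V)
        + (p.1 0 1).imK • ((!![0, qK; qK, 0], 0) : V) := by
      refine Prod.ext ?_ ?_
      · apply Matrix.ext; intro i j
        fin_cases i <;> fin_cases j <;>
          simp only [Fin.mk_zero, Fin.mk_one, Prod.fst_add, Prod.smul_fst, Matrix.add_apply,
            Matrix.smul_apply, Matrix.cons_val', Matrix.cons_val_zero, Matrix.cons_val_one,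
            Matrix.head_cons, Matrix.head_fin_const, Matrix.empty_val', Matrix.cons_val_fin_one,
            smul_zero, add_zero, zero_add, hd, h10] <;>
          first
            | rfl
            | (apply Quaternion.ext <;>
                simp [qI_re, qI_imI, qI_imJ, qI_imK, qJ_re, qJ_imI, qJ_imJ, qJ_imK, qK_re, qK_imI, qK_imJ, qK_imK, hre, smul_smul] <;> ring_nf <;> ring_nf at hrel <;> linarith)
      · simp only [Prod.snd_add, Prod.smul_snd, smul_eq_mul, mul_zero, add_zero, zero_add]
        ring_nf; ring_nf at hrel; linarith
    rw [hp]
    refine add_mem (add_mem (add_mem (add_mem (add_mem (add_mem ?_ ?_) ?_) ?_) ?_) ?_) ?_ <;>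
      refine Submodule.smul_mem _ _ (Submodule.subset_span ?_)
    · exact Set.mem_insert _ _
    · exact Set.mem_insert_of_mem _ (Set.mem_insert _ _)
    · exact Set.mem_insert_of_mem _ (Set.mem_insert_of_mem _ (Set.mem_insert _ _))
    · exact Set.mem_insert_of_mem _ (Set.mem_insert_of_mem _ (Set.mem_insert_of_mem _
        (Set.mem_insert _ _)))
    · exact Set.mem_insert_of_mem _ (Set.mem_insert_of_mem _ (Set.mem_insert_of_mem _
        (Set.mem_insert_of_mem _ (Set.mem_insert _ _))))
    · exact Set.mem_insert_of_mem _ (Set.mem_insert_of_mem _ (Set.mem_insert_of_mem _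
        (Set.mem_insert_of_mem _ (Set.mem_insert_of_mem _ (Set.mem_insert _ _)))))
    · exact Set.mem_insert_of_mem _ (Set.mem_insert_of_mem _ (Set.mem_insert_of_mem _
        (Set.mem_insert_of_mem _ (Set.mem_insert_of_mem _ (Set.mem_insert_of_mem _ rfl)))))

noncomputable def Tq (z q : ℍ[ℝ]) (p : V) : V :=
  (!![z, 0; 0, q] * p.1 * star !![z, 0; 0, q], p.2)

lemma star_diag (z q : ℍ[ℝ]) :
    star (!![z, 0; 0, q] : Matrix (Fin 2) (Fin 2) ℍ[ℝ]) = !![star z, 0; 0, star q] := by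
  apply Matrix.ext; intro i j; fin_cases i <;> fin_cases j <;> simp [Matrix.star_apply]

lemma Tq_fst (z q : ℍ[ℝ]) (p : V) :
    (Tq z q p).1 = !![z * p.1 0 0 * star z, z * p.1 0 1 * star q;
                      q * p.1 1 0 * star z, q * p.1 1 1 * star q] := by
  show !![z, 0; 0, q] * p.1 * star !![z, 0; 0, q] = _
  rw [star_diag, Matrix.eta_fin_two p.1]
  simp [Matrix.mul_fin_two]

lemma conjI (d : ℍ[ℝ]) : qI * d * star qI = ⟨d.re, d.imI, -d.imJ, -d.imK⟩ := by
  apply Quaternion.ext <;>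
    simp [qI_re, qI_imI, qI_imJ, qI_imK, Quaternion.re_mul, Quaternion.imI_mul, Quaternion.imJ_mul, Quaternion.imK_mul]
lemma conjJ (d : ℍ[ℝ]) : qJ * d * star qJ = ⟨d.re, -d.imI, d.imJ, -d.imK⟩ := by
  apply Quaternion.ext <;>
    simp [qJ_re, qJ_imI, qJ_imJ, qJ_imK, Quaternion.re_mul, Quaternion.imI_mul, Quaternion.imJ_mul, Quaternion.imK_mul]
lemma conjK (d : ℍ[ℝ]) : qK * d * star qK = ⟨d.re, -d.imI, -d.imJ, d.imK⟩ := by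
  apply Quaternion.ext <;>
    simp [qK_re, qK_imI, qK_imJ, qK_imK, Quaternion.re_mul, Quaternion.imI_mul, Quaternion.imJ_mul, Quaternion.imK_mul]

@[simp] lemma add_mk_re (x : ℍ[ℝ]) (a b c d : ℝ) : (@HAdd.hAdd ℍ[ℝ] ℍ[ℝ] ℍ[ℝ] instHAdd x ⟨a, b, c, d⟩).re = x.re + a := rfl
@[simp] lemma add_mk_imI (x : ℍ[ℝ]) (a b c d : ℝ) : (@HAdd.hAdd ℍ[ℝ] ℍ[ℝ] ℍ[ℝ] instHAdd x ⟨a, b, c, d⟩).imI = x.imI + b := rfl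
@[simp] lemma add_mk_imJ (x : ℍ[ℝ]) (a b c d : ℝ) : (@HAdd.hAdd ℍ[ℝ] ℍ[ℝ] ℍ[ℝ] instHAdd x ⟨a, b, c, d⟩).imJ = x.imJ + c := rfl
@[simp] lemma add_mk_imK (x : ℍ[ℝ]) (a b c d : ℝ) : (@HAdd.hAdd ℍ[ℝ] ℍ[ℝ] ℍ[ℝ] instHAdd x ⟨a, b, c, d⟩).imK = x.imK + d := rfl

lemma norm_to_sq {z : ℍ[ℝ]} (h : ‖z‖ = 1) :
    z.re ^ 2 + z.imI ^ 2 + z.imJ ^ 2 + z.imK ^ 2 = 1 := by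
  have h2 : Quaternion.normSq z = 1 := by
    rw [Quaternion.normSq_eq_norm_mul_self, h]; norm_num
  rw [Quaternion.normSq_def'] at h2
  exact h2

lemma zconj_imI {z : ℍ[ℝ]} (a : ℍ[ℝ]) (h1 : z.imJ = 0) (h2 : z.imK = 0) (hn : ‖z‖ = 1) :
    (z * a * star z).imI = a.imI := by
  have hx := norm_to_sq hn
  rw [h1, h2] at hx
  simp only [Quaternion.imI_mul, Quaternion.re_mul, Quaternion.imJ_mul, Quaternion.imK_mul,
    Quaternion.re_star, Quaternion.imI_star, Quaternion.imJ_star, Quaternion.imK_star, h1, h2]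
  ring_nf
  linear_combination a.imI * hx

lemma norm_qI : ‖qI‖ = 1 := by
  have h2 : Quaternion.normSq qI = 1 := by simp [Quaternion.normSq_def', qI_re, qI_imI, qI_imJ, qI_imK]
  have := Quaternion.normSq_eq_norm_mul_self qI
  rw [h2] at this
  rcases mul_self_eq_one_iff.1 this.symm with h | h
  · exact h
  · nlinarith [norm_nonneg qI]
lemma norm_qJ : ‖qJ‖ = 1 := by
  have h2 : Quaternion.normSq qJ = 1 := by simp [Quaternion.normSq_def', qJ_re, qJ_imI, qJ_imJ, qJ_imK]
  have := Quaternion.normSq_eq_norm_mul_self qJ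
  rw [h2] at this
  rcases mul_self_eq_one_iff.1 this.symm with h | h
  · exact h
  · nlinarith [norm_nonneg qJ]
lemma norm_qK : ‖qK‖ = 1 := by
  have h2 : Quaternion.normSq qK = 1 := by simp [Quaternion.normSq_def', qK_re, qK_imI, qK_imJ, qK_imK]
  have := Quaternion.normSq_eq_norm_mul_self qK
  rw [h2] at this
  rcases mul_self_eq_one_iff.1 this.symm with h | h
  · exact h
  · nlinarith [norm_nonneg qK]

def Inv (m' : Submodule ℝ V) : Prop :=
  ∀ z q : ℍ[ℝ], z.imJ = 0 → z.imK = 0 → ‖z‖ = 1 → ‖q‖ = 1 → ∀ p ∈ m', Tq z q p ∈ m'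

lemma skew_re00 {A : Matrix (Fin 2) (Fin 2) ℍ[ℝ]} (h : star A = -A) : (A 0 0).re = 0 := by
  have h00 : star (A 0 0) = -(A 0 0) := by
    simpa [Matrix.star_apply] using congrFun (congrFun h 0) 0
  have := congrArg QuaternionAlgebra.re h00; simp at this; linarith

lemma skew_re11 {A : Matrix (Fin 2) (Fin 2) ℍ[ℝ]} (h : star A = -A) : (A 1 1).re = 0 := by
  have h11 : star (A 1 1) = -(A 1 1) := by
    simpa [Matrix.star_apply] using congrFun (congrFun h 1) 1
  have := congrArg QuaternionAlgebra.re h11; simp at this; linarith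

set_option maxHeartbeats 1000000 in
lemma key {m' : Submodule ℝ V} (hle : m' ≤ sp2u1) (hinv : Inv m') {p : V} (hp : p ∈ m') :
    ((!![0, 0; 0, p.1 1 1], 0) : V) ∈ m' ∧
      ((!![(p.1 0 0).imI • qI, 0; 0, 0], p.2) : V) ∈ m' := by
  have hskew : star p.1 = -p.1 := hle hp
  have hre00 : (p.1 0 0).re = 0 := skew_re00 hskew
  have hre11 : (p.1 1 1).re = 0 := skew_re11 hskew
  -- step 1: kill off-diagonal
  have hu_mem : ((2⁻¹ : ℝ) • (p + Tq (-1) 1 p)) ∈ m' :=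
    m'.smul_mem _ (m'.add_mem hp (hinv (-1) 1 (by simp) (by simp) (by simp) (by simp) p hp))
  have hu : (2⁻¹ : ℝ) • (p + Tq (-1) 1 p) = ((!![p.1 0 0, 0; 0, p.1 1 1], p.2) : V) := by
    refine Prod.ext ?_ ?_
    · show (2⁻¹ : ℝ) • (p.1 + (Tq (-1) 1 p).1) = _
      rw [Tq_fst]
      apply Matrix.ext; intro i j
      fin_cases i <;> fin_cases j <;>
        simp only [Fin.mk_zero, Fin.mk_one, Matrix.add_apply, Matrix.smul_apply,
          Matrix.cons_val', Matrix.cons_val_zero, Matrix.cons_val_one, Matrix.head_cons,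
          Matrix.head_fin_const, Matrix.empty_val', Matrix.cons_val_fin_one,
          star_neg, star_one, mul_neg, neg_mul, mul_one, one_mul, neg_neg] <;>
        (apply Quaternion.ext <;> simp <;> ring)
    · show (2⁻¹ : ℝ) • (p.2 + p.2) = p.2
      simp; ring
  rw [hu] at hu_mem
  -- step 2: kill lower-diagonal
  have hIJ : qI.imJ = 0 ∧ qI.imK = 0 ∧ qJ.imJ = 1 ∧ qK.imK = 1 := by
    refine ⟨rfl, rfl, rfl, rfl⟩
  have hx_mem : ((4⁻¹ : ℝ) • ((!![p.1 0 0, 0; 0, p.1 1 1], p.2)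
      + Tq 1 qI (!![p.1 0 0, 0; 0, p.1 1 1], p.2)
      + Tq 1 qJ (!![p.1 0 0, 0; 0, p.1 1 1], p.2)
      + Tq 1 qK (!![p.1 0 0, 0; 0, p.1 1 1], p.2))) ∈ m' := by
    refine m'.smul_mem _ (m'.add_mem (m'.add_mem (m'.add_mem hu_mem ?_) ?_) ?_)
    · exact hinv 1 qI (by simp) (by simp) (by simp) norm_qI _ hu_mem
    · exact hinv 1 qJ (by simp) (by simp) (by simp) norm_qJ _ hu_mem
    · exact hinv 1 qK (by simp) (by simp) (by simp) norm_qK _ hu_mem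
  have hx : ((4⁻¹ : ℝ) • ((!![p.1 0 0, 0; 0, p.1 1 1], p.2)
      + Tq 1 qI (!![p.1 0 0, 0; 0, p.1 1 1], p.2)
      + Tq 1 qJ (!![p.1 0 0, 0; 0, p.1 1 1], p.2)
      + Tq 1 qK (!![p.1 0 0, 0; 0, p.1 1 1], p.2)))
      = ((!![p.1 0 0, 0; 0, 0], p.2) : V) := by
    refine Prod.ext ?_ ?_
    · show (4⁻¹ : ℝ) • ((!![p.1 0 0, 0; 0, p.1 1 1] : Matrix (Fin 2) (Fin 2) ℍ[ℝ])
        + (Tq 1 qI (!![p.1 0 0, 0; 0, p.1 1 1], p.2)).1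
        + (Tq 1 qJ (!![p.1 0 0, 0; 0, p.1 1 1], p.2)).1
        + (Tq 1 qK (!![p.1 0 0, 0; 0, p.1 1 1], p.2)).1) = _
      rw [Tq_fst, Tq_fst, Tq_fst]
      apply Matrix.ext; intro i j
      fin_cases i <;> fin_cases j <;>
        simp only [Fin.mk_zero, Fin.mk_one, Matrix.add_apply, Matrix.smul_apply,
          Matrix.cons_val', Matrix.cons_val_zero, Matrix.cons_val_one, Matrix.head_cons,
          Matrix.head_fin_const, Matrix.empty_val', Matrix.cons_val_fin_one,
          star_one, mul_one, one_mul, mul_zero, zero_mul, add_zero, zero_add, smul_zero,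
          conjI, conjJ, conjK] <;>
        (apply Quaternion.ext <;> simp [hre11] <;> ring)
    · show (4⁻¹ : ℝ) • (p.2 + p.2 + p.2 + p.2) = p.2
      simp; ring
  rw [hx] at hx_mem
  constructor
  · have hsub := m'.sub_mem hu_mem hx_mem
    have : ((!![p.1 0 0, 0; 0, p.1 1 1], p.2) : V) - (!![p.1 0 0, 0; 0, 0], p.2)
        = ((!![0, 0; 0, p.1 1 1], 0) : V) := by
      refine Prod.ext ?_ ?_
      · apply Matrix.ext; intro i j
        fin_cases i <;> fin_cases j <;>
          simp [Matrix.sub_apply]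
      · simp
    rwa [this] at hsub
  · -- step 3: extract imI part of upper diagonal
    have ht_mem : ((2⁻¹ : ℝ) • ((!![p.1 0 0, 0; 0, 0], p.2)
        + Tq qI 1 (!![p.1 0 0, 0; 0, 0], p.2))) ∈ m' := by
      refine m'.smul_mem _ (m'.add_mem hx_mem ?_)
      exact hinv qI 1 rfl rfl norm_qI (by simp) _ hx_mem
    have ht : ((2⁻¹ : ℝ) • ((!![p.1 0 0, 0; 0, 0], p.2)
        + Tq qI 1 (!![p.1 0 0, 0; 0, 0], p.2)))
        = ((!![(p.1 0 0).imI • qI, 0; 0, 0], p.2) : V) := by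
      refine Prod.ext ?_ ?_
      · show (2⁻¹ : ℝ) • ((!![p.1 0 0, 0; 0, 0] : Matrix (Fin 2) (Fin 2) ℍ[ℝ])
          + (Tq qI 1 (!![p.1 0 0, 0; 0, 0], p.2)).1) = _
        rw [Tq_fst]
        apply Matrix.ext; intro i j
        fin_cases i <;> fin_cases j <;>
          simp only [Fin.mk_zero, Fin.mk_one, Matrix.add_apply, Matrix.smul_apply,
            Matrix.cons_val', Matrix.cons_val_zero, Matrix.cons_val_one, Matrix.head_cons,
            Matrix.head_fin_const, Matrix.empty_val', Matrix.cons_val_fin_one,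
            star_one, mul_one, one_mul, mul_zero, zero_mul, add_zero, zero_add, smul_zero,
            conjI] <;>
          (apply Quaternion.ext <;> simp [qI_re, qI_imI, qI_imJ, qI_imK, hre00] <;> ring)
      · show (2⁻¹ : ℝ) • (p.2 + p.2) = p.2
        simp; ring
    rwa [ht] at ht_mem

end Red5

open Red5 in
set_option maxHeartbeats 1000000 in
/-- With `K̄ = {(diag(z,q), z) : z ∈ U(1), q ∈ Sp(1)}` acting on
`V = 𝔰𝔭(2) ⊕ 𝔲(1)` by `(diag(z,q), z) • (A, s) = (diag(z,q) A diag(z,q)*, s)`, a real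
subspace `m′ ⊆ V` is a `K̄`-invariant complement of `k̄` if and only if there exists a
(unique) `λ ∈ ℝ` with
`m′ = span_ℝ{([[0,1],[−1,0]],0), ((1+λ)[[i,0],[0,0]], λ), ([[0,i],[i,0]],0),
([[j,0],[0,0]],0), ([[0,j],[j,0]],0), ([[k,0],[0,0]],0), ([[0,k],[k,0]],0)}`. -/
theorem reductive_complements_in_sp2u1
    (m' : Submodule ℝ (Matrix (Fin 2) (Fin 2) ℍ[ℝ] × ℝ)) :
    (m' ≤ sp2u1 ∧ m' ⊓ kbarSp = ⊥ ∧ m' ⊔ kbarSp = sp2u1 ∧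
      ∀ z q : ℍ[ℝ], z.imJ = 0 → z.imK = 0 → ‖z‖ = 1 → ‖q‖ = 1 →
        ∀ p ∈ m',
          ((!![z, 0; 0, q] : Matrix (Fin 2) (Fin 2) ℍ[ℝ]) * p.1 * star !![z, 0; 0, q], p.2)
            ∈ m') ↔
    ∃! lam : ℝ, m' = Submodule.span ℝ
      ({(!![0, 1; -1, 0], 0),
        ((1 + lam) • !![qI, 0; 0, 0], lam),
        (!![0, qI; qI, 0], 0),
        (!![qJ, 0; 0, 0], 0),
        (!![0, qJ; qJ, 0], 0),
        (!![qK, 0; 0, 0], 0),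
        (!![0, qK; qK, 0], 0)} : Set (Matrix (Fin 2) (Fin 2) ℍ[ℝ] × ℝ)) := by
  constructor
  · rintro ⟨hle, hinf, hsup, hinv'⟩
    have hinv : Red5.Inv m' := hinv'
    have hd0 : ∀ p ∈ m', p.1 1 1 = 0 := by
      intro p hp
      have h1m := (key hle hinv hp).1
      have hkm : ((!![0, 0; 0, p.1 1 1], 0) : V) ∈ kbarSp := by
        rw [kbar_eq]
        exact ⟨by simp, by simp, by simp, by simpa using skew_re11 (hle hp)⟩
      have h0 : ((!![0, 0; 0, p.1 1 1], 0) : V) = 0 := by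
        have hmem := Submodule.mem_inf.2 ⟨h1m, hkm⟩
        rwa [hinf, Submodule.mem_bot] at hmem
      have := congrFun (congrFun (congrArg Prod.fst h0) 1) 1
      simpa using this
    -- find lambda
    have he1 : ((!![qI, 0; 0, 0], 0) : V) ∈ m' ⊔ kbarSp := by
      rw [hsup]
      show star (!![qI, 0; 0, 0] : Matrix (Fin 2) (Fin 2) ℍ[ℝ]) = -(!![qI, 0; 0, 0])
      apply Matrix.ext; intro i j
      fin_cases i <;> fin_cases j <;>
        simp only [Fin.mk_zero, Fin.mk_one, Matrix.star_apply, Matrix.neg_apply,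
          Matrix.cons_val', Matrix.cons_val_zero, Matrix.cons_val_one, Matrix.head_cons,
          Matrix.head_fin_const, Matrix.empty_val', Matrix.cons_val_fin_one,
          star_zero, neg_zero] <;>
        first
          | rfl
          | (apply Quaternion.ext <;> simp [qI_re, qI_imI, qI_imJ, qI_imK])
    obtain ⟨y, hy, z, hz, hyz⟩ := Submodule.mem_sup.1 he1
    rw [kbar_eq] at hz
    obtain ⟨e1', e2', e3', e4'⟩ := hz
    have hy00 : y.1 0 0 = qI - z.2 • qI := by
      have h1 : y.1 0 0 + z.1 0 0 = qI := by
        simpa [Matrix.add_apply] using congrFun (congrFun (congrArg Prod.fst hyz) 0) 0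
      rw [e3'] at h1
      exact eq_sub_of_add_eq h1
    have hyimI : (y.1 0 0).imI = 1 - z.2 := by rw [hy00]; simp [qI_re, qI_imI, qI_imJ, qI_imK]
    have hy2 : y.2 = -z.2 := by
      have h2 : y.2 + z.2 = 0 := congrArg Prod.snd hyz
      linarith
    have hg2 : (((1 + (-z.2)) • !![qI, 0; 0, 0], -z.2) : V) ∈ m' := by
      have hty := (key hle hinv hy).2
      have heq : ((!![(y.1 0 0).imI • qI, 0; 0, 0], y.2) : V)
          = (((1 + (-z.2)) • !![qI, 0; 0, 0], -z.2) : V) := by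
        have h1z : (1 : ℝ) + -z.2 = 1 - z.2 := by ring
        rw [h1z]
        refine Prod.ext ?_ hy2
        apply Matrix.ext; intro i j
        fin_cases i <;> fin_cases j <;>
          simp only [Fin.mk_zero, Fin.mk_one, Matrix.smul_apply, Matrix.cons_val',
            Matrix.cons_val_zero, Matrix.cons_val_one, Matrix.head_cons, Matrix.head_fin_const,
            Matrix.empty_val', Matrix.cons_val_fin_one, smul_zero, hyimI] <;>
          first
            | rfl
            | simp
      rw [← heq]; exact hty
    -- m' ≤ Meq (-z.2)
    have hle2 : m' ≤ Meq (-z.2) := by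
      intro p hp
      refine ⟨hle hp, hd0 p hp, ?_⟩
      have htp := (key hle hinv hp).2
      have hq_mem : ((!![(p.1 0 0).imI • qI, 0; 0, 0], p.2) : V)
          - ((p.1 0 0).imI - p.2) • (((1 + (-z.2)) • !![qI, 0; 0, 0], -z.2) : V) ∈ m' :=
        m'.sub_mem htp (m'.smul_mem _ hg2)
      have hq_eq : ((!![(p.1 0 0).imI • qI, 0; 0, 0], p.2) : V)
          - ((p.1 0 0).imI - p.2) • (((1 + (-z.2)) • !![qI, 0; 0, 0], -z.2) : V)
          = (p.2 - ((p.1 0 0).imI - p.2) * (-z.2)) • ((!![qI, 0; 0, 0], 1) : V) := by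
        refine Prod.ext ?_ ?_
        · apply Matrix.ext; intro i j
          fin_cases i <;> fin_cases j <;>
            simp only [Fin.mk_zero, Fin.mk_one, Prod.fst_sub, Prod.smul_fst, Matrix.sub_apply,
              Matrix.smul_apply, Matrix.cons_val', Matrix.cons_val_zero, Matrix.cons_val_one,
              Matrix.head_cons, Matrix.head_fin_const, Matrix.empty_val', Matrix.cons_val_fin_one,
              smul_zero, sub_zero, smul_smul] <;>
            first
              | (apply Quaternion.ext <;> simp [qI_re, qI_imI, qI_imJ, qI_imK] <;> ring)
              | simp
        · show p.2 - ((p.1 0 0).imI - p.2) * (-z.2)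
            = (p.2 - ((p.1 0 0).imI - p.2) * (-z.2)) * 1
          ring
      rw [hq_eq] at hq_mem
      have hq_k : (p.2 - ((p.1 0 0).imI - p.2) * (-z.2)) • ((!![qI, 0; 0, 0], 1) : V) ∈ kbarSp :=
        Submodule.smul_mem _ _ (Submodule.subset_span (Set.mem_insert _ _))
      have h0 : (p.2 - ((p.1 0 0).imI - p.2) * (-z.2)) • ((!![qI, 0; 0, 0], 1) : V) = 0 := by
        have hmem := Submodule.mem_inf.2 ⟨hq_mem, hq_k⟩
        rwa [hinf, Submodule.mem_bot] at hmem
      have h2 : (p.2 - ((p.1 0 0).imI - p.2) * (-z.2)) * 1 = 0 := congrArg Prod.snd h0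
      rw [mul_one] at h2
      linear_combination -h2
    -- Meq (-z.2) ≤ m'
    have hge2 : Meq (-z.2) ≤ m' := by
      rintro v ⟨hv1, hv2, hv3⟩
      have hvsup : v ∈ m' ⊔ kbarSp := by rw [hsup]; exact hv1
      obtain ⟨y2, hy2m, z2, hz2, hyz2⟩ := Submodule.mem_sup.1 hvsup
      rw [kbar_eq] at hz2
      obtain ⟨f1, f2, f3, f4⟩ := hz2
      obtain ⟨g1', g2', g3'⟩ := hle2 hy2m
      have hsum00 : y2.1 0 0 + z2.1 0 0 = v.1 0 0 := by
        simpa [Matrix.add_apply] using congrFun (congrFun (congrArg Prod.fst hyz2) 0) 0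
      have hsumim : (y2.1 0 0).imI + z2.2 = (v.1 0 0).imI := by
        have := congrArg QuaternionAlgebra.imI hsum00
        simpa [f3, qI_re, qI_imI, qI_imJ, qI_imK] using this
      have hsnd : y2.2 + z2.2 = v.2 := congrArg Prod.snd hyz2
      have hz2snd : z2.2 = 0 := by
        linear_combination -hv3 + g3' - (-z.2) * hsumim + (1 + (-z.2)) * hsnd
      have h11 : z2.1 1 1 = 0 := by
        have hsum11 : y2.1 1 1 + z2.1 1 1 = v.1 1 1 := by
          simpa [Matrix.add_apply] using congrFun (congrFun (congrArg Prod.fst hyz2) 1) 1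
        rw [g2', hv2] at hsum11
        simpa using hsum11
      have hz0 : z2 = 0 := by
        refine Prod.ext ?_ (by simpa using hz2snd)
        apply Matrix.ext; intro i j
        fin_cases i <;> fin_cases j <;>
          simp [f1, f2, f3, h11, hz2snd]
      have hvy : y2 = v := by rw [← hyz2, hz0, add_zero]
      rwa [← hvy]
    have hm'eq : m' = Meq (-z.2) := le_antisymm hle2 hge2
    refine ⟨-z.2, hm'eq.trans (mbar_eq (-z.2)).symm, ?_⟩
    intro mu hmu
    have hmemg : (((1 + mu) • !![qI, 0; 0, 0], mu) : V) ∈ m' := by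
      rw [hmu]
      exact Submodule.subset_span (Set.mem_insert_of_mem _ (Set.mem_insert _ _))
    obtain ⟨-, -, hrel⟩ := hle2 hmemg
    have hq1 : qI.imI = 1 := rfl
    simp only [Matrix.smul_apply, Matrix.of_apply, Matrix.cons_val', Matrix.cons_val_zero, Matrix.cons_val_one, Matrix.head_cons,
      Matrix.head_fin_const, Matrix.empty_val', Matrix.cons_val_fin_one, Quaternion.imI_smul, smul_eq_mul, hq1, mul_one] at hrel
    linear_combination -hrel
  · rintro ⟨lam, hm, -⟩
    have hmeq : m' = Meq lam := hm.trans (mbar_eq lam)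
    subst hmeq
    refine ⟨fun p hp => hp.1, ?_, ?_, ?_⟩
    · rw [kbar_eq, eq_bot_iff]
      rintro p hp
      obtain ⟨⟨h1, h2, h3⟩, e1, e2, e3, e4⟩ := Submodule.mem_inf.1 hp
      have himI : (p.1 0 0).imI = p.2 := by rw [e3]; simp [qI_re, qI_imI, qI_imJ, qI_imK]
      rw [himI] at h3
      have hs : p.2 = 0 := by linear_combination -h3
      rw [Submodule.mem_bot]
      refine Prod.ext ?_ hs
      apply Matrix.ext; intro i j
      fin_cases i <;> fin_cases j <;> simp [e1, e2, e3, h2, hs]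
    · apply le_antisymm
      · refine sup_le (fun p hp => hp.1) ?_
        rw [kbar_eq]
        rintro p ⟨e1, e2, e3, e4⟩
        show star p.1 = -p.1
        apply Matrix.ext; intro i j
        fin_cases i <;> fin_cases j <;>
          simp only [Fin.mk_zero, Fin.mk_one, Matrix.star_apply, Matrix.neg_apply, e1, e2, e3,
            star_zero, neg_zero] <;>
          (apply Quaternion.ext <;> simp [qI_re, qI_imI, qI_imJ, qI_imK, e4])
      · intro p hp
        have hskew : star p.1 = -p.1 := hp
        have hd_re : (p.1 1 1).re = 0 := skew_re11 hskew
        have hws : star (!![(p.2 - lam * ((p.1 0 0).imI - p.2)) • qI, 0; 0, p.1 1 1]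
            : Matrix (Fin 2) (Fin 2) ℍ[ℝ])
            = -(!![(p.2 - lam * ((p.1 0 0).imI - p.2)) • qI, 0; 0, p.1 1 1]) := by
          apply Matrix.ext; intro i j
          fin_cases i <;> fin_cases j <;>
            simp only [Fin.mk_zero, Fin.mk_one, Matrix.star_apply, Matrix.neg_apply,
              Matrix.cons_val', Matrix.cons_val_zero, Matrix.cons_val_one, Matrix.head_cons,
              Matrix.head_fin_const, Matrix.empty_val', Matrix.cons_val_fin_one,
              star_zero, neg_zero] <;>
            (apply Quaternion.ext <;> simp [qI_re, qI_imI, qI_imJ, qI_imK, hd_re])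
        refine Submodule.mem_sup.2
          ⟨p - ((!![(p.2 - lam * ((p.1 0 0).imI - p.2)) • qI, 0; 0, p.1 1 1],
              p.2 - lam * ((p.1 0 0).imI - p.2)) : V), ?_,
            ((!![(p.2 - lam * ((p.1 0 0).imI - p.2)) • qI, 0; 0, p.1 1 1],
              p.2 - lam * ((p.1 0 0).imI - p.2)) : V), ?_, by abel⟩
        · refine ⟨?_, ?_, ?_⟩
          · show star (p.1 - _) = -(p.1 - _)
            rw [star_sub, hskew, hws]
            abel
          · show (p.1 - _) 1 1 = 0
            simp [Matrix.sub_apply]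
          · show lam * ((p.1 - _) 0 0).imI = (1 + lam) * (p.2 - (p.2 - lam * ((p.1 0 0).imI - p.2)))
            have hq1 : qI.imI = 1 := rfl
            simp only [Matrix.sub_apply, Quaternion.imI_sub, Matrix.of_apply, Matrix.cons_val',
              Matrix.cons_val_zero, Matrix.cons_val_one, Matrix.head_cons, Matrix.head_fin_const,
              Matrix.empty_val', Matrix.cons_val_fin_one, Quaternion.imI_smul, smul_eq_mul,
              hq1, mul_one]
            ring
        · rw [kbar_eq]
          exact ⟨by simp, by simp, by simp, by simpa using hd_re⟩
    · intro z q hz1 hz2 hz3 hq p hp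
      obtain ⟨h1, h2, h3⟩ := hp
      have hTq := Tq_fst z q p
      refine ⟨?_, ?_, ?_⟩
      · show star (!![z, 0; 0, q] * p.1 * star !![z, 0; 0, q])
          = -(!![z, 0; 0, q] * p.1 * star !![z, 0; 0, q])
        simp only [star_mul, star_star, h1, neg_mul, mul_neg, mul_assoc]
      · show (Tq z q p).1 1 1 = 0
        rw [hTq]
        simp [h2]
      · show lam * ((Tq z q p).1 0 0).imI = (1 + lam) * p.2
        rw [hTq]
        simp only [Matrix.of_apply, Matrix.cons_val', Matrix.cons_val_zero, Matrix.cons_val_one,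
          Matrix.head_cons, Matrix.head_fin_const, Matrix.empty_val', Matrix.cons_val_fin_one]
        rw [zconj_imI _ hz1 hz2 hz3]
        exact h3
end

section
/- Consider the action of the product group Sp(2) × U(1) on ℍ² given by (A, z)•(q₁, q₂) = A·(q₁ \bar{z}, q₂ \bar{z})ᵀ, where A ∈ Sp(2) acts by matrix multiplication on the left and \bar{z} multiplies each quaternionic entry on the right. Then this action preserves the unit sphere S⁷ = {(q₁,q₂) ∈ ℍ² : |q₁|² + |q₂|² = 1}, and the set of pairs (A, z) ∈ Sp(2) × U(1) acting as the identity on S⁷ is exactly {(I₂, 1), (−I₂, −1)}. Hence the quotient Sp(2)U(1) = (Sp(2) × U(1))/{±(I₂,1)} acts effectively on S⁷. -/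
open scoped Quaternion

/-- The action of `Sp(2) × U(1)` on `ℍ²`:
`(A, z) • (q₁, q₂) = A · (q₁ z̄, q₂ z̄)ᵀ`, with `z̄ = star z`. -/
noncomputable def sp2u1Act (A : Matrix (Fin 2) (Fin 2) ℍ[ℝ]) (z : ℍ[ℝ])
    (q : Fin 2 → ℍ[ℝ]) : Fin 2 → ℍ[ℝ] :=
  A.mulVec fun i => q i * star z

open Matrix in
lemma aux_sum_sq (w : Fin 2 → ℍ[ℝ]) :
    ‖w 0‖ ^ 2 + ‖w 1‖ ^ 2 = (dotProduct (star w) w).re := by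
  simp [dotProduct, Fin.sum_univ_two, Quaternion.star_mul_self, sq,
    ← Quaternion.normSq_eq_norm_mul_self]

open Matrix in
lemma aux_unitary_dot (A : Matrix (Fin 2) (Fin 2) ℍ[ℝ])
    (hA : A ∈ unitary (Matrix (Fin 2) (Fin 2) ℍ[ℝ])) (v : Fin 2 → ℍ[ℝ]) :
    dotProduct (star (A.mulVec v)) (A.mulVec v) = dotProduct (star v) v := by
  rw [Matrix.star_mulVec, ← dotProduct_mulVec, Matrix.mulVec_mulVec]
  have h1 : Aᴴ * A = 1 := hA.1
  rw [h1, Matrix.one_mulVec]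

lemma aux_kernel (A : Matrix (Fin 2) (Fin 2) ℍ[ℝ])
    (z : ℍ[ℝ]) (hJ : z.imJ = 0) (hK : z.imK = 0) (hz : ‖z‖ = 1)
    (hfix : ∀ q : Fin 2 → ℍ[ℝ], ‖q 0‖ ^ 2 + ‖q 1‖ ^ 2 = 1 → sp2u1Act A z q = q) :
    (A = 1 ∧ z = 1) ∨ (A = -1 ∧ z = -1) := by
  have hnz : Quaternion.normSq z = 1 := by
    rw [Quaternion.normSq_eq_norm_mul_self, hz, one_mul]
  have hz1 : z * star z = 1 := by
    rw [Quaternion.self_mul_star, hnz, Quaternion.coe_one]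
  -- first column
  have h1 := hfix ![z, 0] (by simp [hz])
  have e00 : A 0 0 = z := by
    have := congrFun h1 0
    simpa [sp2u1Act, Matrix.mulVec, dotProduct, Fin.sum_univ_two, hz1] using this
  have e10 : A 1 0 = 0 := by
    have := congrFun h1 1
    simpa [sp2u1Act, Matrix.mulVec, dotProduct, Fin.sum_univ_two, hz1] using this
  -- second column
  have h2 := hfix ![0, z] (by simp [hz])
  have e01 : A 0 1 = 0 := by
    have := congrFun h2 0
    simpa [sp2u1Act, Matrix.mulVec, dotProduct, Fin.sum_univ_two, hz1] using this
  have e11 : A 1 1 = z := by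
    have := congrFun h2 1
    simpa [sp2u1Act, Matrix.mulVec, dotProduct, Fin.sum_univ_two, hz1] using this
  -- commuting with j forces z real
  set jq : ℍ[ℝ] := ⟨0, 0, 1, 0⟩ with hjq
  have hjnorm : ‖jq * z‖ ^ 2 + ‖(0 : ℍ[ℝ])‖ ^ 2 = 1 := by
    rw [norm_zero, sq, sq, ← Quaternion.normSq_eq_norm_mul_self, _root_.map_mul]
    have : Quaternion.normSq jq = 1 := by
      rw [Quaternion.normSq_def']
      simp [hjq]
    rw [this, one_mul, hnz]
    norm_num
  have h3 := hfix ![jq * z, 0] hjnorm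
  have hcomm : z * jq = jq * z := by
    have := congrFun h3 0
    simp [sp2u1Act, Matrix.mulVec, dotProduct, Fin.sum_univ_two, e00, e01,
      mul_assoc, hz1] at this
    exact this
  have hI : z.imI = 0 := by
    have := congrArg QuaternionAlgebra.imK hcomm
    rw [Quaternion.imK_mul, Quaternion.imK_mul] at this
    simp [hjq, Quaternion.imK_mul, hJ, hK] at this
    linarith
  have hre : (z.re - 1) * (z.re + 1) = 0 := by
    have : z.re ^ 2 = 1 := by
      have := hnz
      rw [Quaternion.normSq_def'] at this
      nlinarith [this]
    nlinarith [this]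
  rcases mul_eq_zero.mp hre with h | h
  · left
    have hz' : z = 1 := by
      ext <;> simp [hI, hJ, hK] <;> linarith
    refine ⟨?_, hz'⟩
    refine Matrix.ext fun i j => ?_
    fin_cases i <;> fin_cases j <;>
      simp [e00, e01, e10, e11, hz', Matrix.one_apply]
  · right
    have hz' : z = -1 := by
      ext <;> simp [hI, hJ, hK] <;> linarith
    refine ⟨?_, hz'⟩
    refine Matrix.ext fun i j => ?_
    fin_cases i <;> fin_cases j <;>
      simp [e00, e01, e10, e11, hz', Matrix.one_apply]

/-- The action `(A, z) • (q₁, q₂) = A (q₁ z̄, q₂ z̄)ᵀ` of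
`Sp(2) × U(1)` on `ℍ²` preserves the unit sphere `S⁷`, and the pairs `(A, z)` acting
as the identity on `S⁷` are exactly `(I₂, 1)` and `(−I₂, −1)`.  (Hence
`Sp(2)U(1) = (Sp(2) × U(1))/{±(I₂,1)}` acts effectively on `S⁷`.) -/
theorem sp2u1_action_preserves_sphere_and_kernel :
    (∀ A ∈ unitary (Matrix (Fin 2) (Fin 2) ℍ[ℝ]),
      ∀ z : ℍ[ℝ], z.imJ = 0 → z.imK = 0 → ‖z‖ = 1 →
        ∀ q : Fin 2 → ℍ[ℝ], ‖q 0‖ ^ 2 + ‖q 1‖ ^ 2 = 1 →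
          ‖sp2u1Act A z q 0‖ ^ 2 + ‖sp2u1Act A z q 1‖ ^ 2 = 1) ∧
    (∀ A ∈ unitary (Matrix (Fin 2) (Fin 2) ℍ[ℝ]),
      ∀ z : ℍ[ℝ], z.imJ = 0 → z.imK = 0 → ‖z‖ = 1 →
        ((∀ q : Fin 2 → ℍ[ℝ], ‖q 0‖ ^ 2 + ‖q 1‖ ^ 2 = 1 → sp2u1Act A z q = q) ↔
          (A = 1 ∧ z = 1) ∨ (A = -1 ∧ z = -1))) := by
  constructor
  · intro A hA z _ _ hz q hq
    have h := aux_unitary_dot A hA (fun i => q i * star z)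
    show ‖(A.mulVec fun i => q i * star z) 0‖ ^ 2 + ‖(A.mulVec fun i => q i * star z) 1‖ ^ 2 = 1
    rw [aux_sum_sq, h, ← aux_sum_sq]
    simp [norm_mul, norm_star, hz, mul_pow, hq]
  · intro A _ z hJ hK hz
    constructor
    · exact aux_kernel A z hJ hK hz
    · rintro (⟨hA1, hz1⟩ | ⟨hA1, hz1⟩) q _ <;> subst hA1 <;> subst hz1 <;> funext i
      · simp [sp2u1Act, Matrix.one_mulVec]
      · simp [sp2u1Act, Matrix.neg_mulVec, Matrix.one_mulVec]
end
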